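/- arXiv:1511.07644 — 3 statements merged into one kernel-verified Lean document; each statement's English description precedes it below -/
import Mathlib

section
/- Let X be a finite set of positive integers greater than 1 such that the bipartite divisor graph B(X) is a cycle of length n with n ≥ 6. Then both the prime graph Δ(X) (vertices ρ(X), edge pq iff pq divides some element of X) and the common divisor graph Γ(X) (vertices X, edge mn iff gcd(m,n) > 1) are cycles. -/
open CategoryTheory

/-- The set of irreducible complex character degrees of a group. -/
def cdSet (G : Type) [Group G] : Set ℕ :=
  {n | ∃ V : FDRep ℂ G, Simple V ∧ Module.finrank ℂ V = n}

/-- Primes dividing some element of `X`. -/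
def rhoSet (X : Set ℕ) : Set ℕ := {p | p.Prime ∧ ∃ m ∈ X, p ∣ m}

/-- The bipartite divisor graph of a set `X` of integers, on `ℕ ⊕ ℕ`
(left: primes, right: elements of `X`). -/
def bdg (X : Set ℕ) : SimpleGraph (ℕ ⊕ ℕ) where
  Adj v w :=
    (∃ p m, v = Sum.inl p ∧ w = Sum.inr m ∧ p.Prime ∧ m ∈ X ∧ p ∣ m) ∨
    (∃ p m, w = Sum.inl p ∧ v = Sum.inr m ∧ p.Prime ∧ m ∈ X ∧ p ∣ m)
  symm := ⟨fun v w h => h.symm⟩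
  loopless := ⟨by rintro v (⟨p, m, h1, h2, _⟩ | ⟨p, m, h1, h2, _⟩) <;> subst h1 <;> simp_all⟩

/-- The vertex set of the bipartite divisor graph. -/
def bdgVerts (X : Set ℕ) : Set (ℕ ⊕ ℕ) :=
  {v | Sum.elim (· ∈ rhoSet X) (· ∈ X) v}

/-- The bipartite divisor graph induced on its genuine vertex set. -/
def bdgGraph (X : Set ℕ) : SimpleGraph (bdgVerts X) :=
  (bdg X).induce (bdgVerts X)

/-- The bipartite divisor graph `B(G)` of the character degrees of `G`. -/
def BG (G : Type) [Group G] : SimpleGraph (bdgVerts (cdSet G \ {1})) :=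
  bdgGraph (cdSet G \ {1})

/-- `Is a cycle of length n`. -/
def IsCycleOfLen {V : Type*} (Γ : SimpleGraph V) (n : ℕ) : Prop :=
  Nonempty (Γ ≃g SimpleGraph.cycleGraph n)

/-- `Is a path of length n` (a path with `n` edges has `n+1` vertices). -/
def IsPathOfLen {V : Type*} (Γ : SimpleGraph V) (n : ℕ) : Prop :=
  Nonempty (Γ ≃g SimpleGraph.pathGraph (n + 1))

/-- The prime graph `Δ(X)`. -/
def deltaG (X : Set ℕ) : SimpleGraph (rhoSet X) :=
  SimpleGraph.induce (rhoSet X)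
    { Adj := fun p q => p ≠ q ∧ p.Prime ∧ q.Prime ∧ ∃ m ∈ X, p ∣ m ∧ q ∣ m
      symm := ⟨fun p q h => ⟨h.1.symm, h.2.2.1, h.2.1, by tauto⟩⟩
      loopless := ⟨fun p h => h.1 rfl⟩ }

/-- The common divisor graph `Γ(X)`. -/
def gammaG (X : Set ℕ) : SimpleGraph X :=
  SimpleGraph.induce X
    { Adj := fun m n => m ≠ n ∧ m ∈ X ∧ n ∈ X ∧ Nat.gcd m n ≠ 1
      symm := ⟨fun m n h => ⟨h.1.symm, h.2.2.1, h.2.1, by rw [Nat.gcd_comm]; exact h.2.2.2⟩⟩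
      loopless := ⟨fun m h => h.1 rfl⟩ }


lemma two_mul_mod (a m : ℕ) (h : a < 2*m) : a % m = if a < m then a else a - m := by
  rcases lt_or_ge a m with h'|h'
  · rw [Nat.mod_eq_of_lt h', if_pos h']
  · rw [if_neg (not_lt.mpr h'), Nat.mod_eq_sub_mod h', Nat.mod_eq_of_lt (by omega)]

lemma fin_sub_val {n : ℕ} (a b : Fin n) : (a - b).val = (n - b.val + a.val) % n := by
  rw [Fin.sub_def]

lemma cycle_adj_nat {m : ℕ} (u v : Fin m) :
    (SimpleGraph.cycleGraph m).Adj u v ↔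
      (u.val + 1 = v.val ∨ v.val + 1 = u.val ∨
       (u.val = 0 ∧ v.val = m - 1 ∧ 2 ≤ m) ∨ (v.val = 0 ∧ u.val = m - 1 ∧ 2 ≤ m)) := by
  have h1 := u.isLt
  have h2 := v.isLt
  rw [SimpleGraph.cycleGraph_adj', fin_sub_val, fin_sub_val,
    two_mul_mod _ _ (by omega), two_mul_mod _ _ (by omega)]
  split_ifs <;> omega

lemma bdg_adj_inl_inr {X : Set ℕ} {p m : ℕ} (h : (bdg X).Adj (Sum.inl p) (Sum.inr m)) :
    p.Prime ∧ m ∈ X ∧ p ∣ m := by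
  rcases h with ⟨p', m', h1, h2, h3, h4, h5⟩ | ⟨p', m', h1, h2, h3, h4, h5⟩ <;> simp_all

lemma bdg_adj_mk {X : Set ℕ} {p m : ℕ} (hp : p.Prime) (hm : m ∈ X) (hd : p ∣ m) :
    (bdg X).Adj (Sum.inl p) (Sum.inr m) := Or.inl ⟨p, m, rfl, rfl, hp, hm, hd⟩

lemma bdgGraph_adj {X : Set ℕ} (u v : bdgVerts X) :
    (bdgGraph X).Adj u v ↔ (bdg X).Adj u.1 v.1 := Iff.rfl

lemma mem_rho_of_left {X : Set ℕ} (v : bdgVerts X) (h : (v : ℕ ⊕ ℕ).isLeft) :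
    (v : ℕ ⊕ ℕ).getLeft h ∈ rhoSet X := by
  obtain ⟨v, hv⟩ := v
  cases v with
  | inl p => exact hv
  | inr m => simp at h

lemma mem_X_of_right {X : Set ℕ} (v : bdgVerts X) (h : (v : ℕ ⊕ ℕ).isRight) :
    (v : ℕ ⊕ ℕ).getRight h ∈ X := by
  obtain ⟨v, hv⟩ := v
  cases v with
  | inl p => simp at h
  | inr m => exact hv


lemma bdg_adj_mk' {X : Set ℕ} {p m : ℕ} (hp : p.Prime) (hm : m ∈ X) (hd : p ∣ m) :
    (bdg X).Adj (Sum.inr m) (Sum.inl p) := Or.inr ⟨p, m, rfl, rfl, hp, hm, hd⟩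

def posE (n : ℕ) (j : Fin (n/2)) : Fin n := ⟨2*j.val, by have := j.isLt; omega⟩
def posO (n : ℕ) (j : Fin (n/2)) : Fin n := ⟨2*j.val+1, by have := j.isLt; omega⟩

lemma posE_val (n : ℕ) (j : Fin (n/2)) : (posE n j).val = 2*j.val := rfl
lemma posO_val (n : ℕ) (j : Fin (n/2)) : (posO n j).val = 2*j.val+1 := rfl

lemma key {X : Set ℕ} {n : ℕ} (hn : 6 ≤ n) (hev : n % 2 = 0)
    (ψ : SimpleGraph.cycleGraph n ≃g bdgGraph X)
    (hside : ∀ i : Fin n, (ψ i).1.isLeft = true ↔ i.val % 2 = 0) :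
    Nonempty (deltaG X ≃g SimpleGraph.cycleGraph (n/2)) ∧
    Nonempty (gammaG X ≃g SimpleGraph.cycleGraph (n/2)) := by
  set k := n / 2 with hkdef
  have hk : 3 ≤ k := by omega
  have hnk : n = 2 * k := by omega
  -- left/right side facts
  have hL : ∀ j : Fin k, (ψ (posE n j)).1.isLeft = true := by
    intro j
    exact (hside _).mpr (by simp [posE, Nat.mul_mod_right])
  have hR : ∀ j : Fin k, (ψ (posO n j)).1.isRight = true := by
    intro j
    have h := hside (posO n j)
    rcases hv : (ψ (posO n j)).1 with p | m
    · rw [hv] at h; simp [posO] at h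
    · rfl
  -- the two vertex functions
  set dFun : Fin k → rhoSet X :=
    fun j => ⟨(ψ (posE n j)).1.getLeft (hL j), mem_rho_of_left _ _⟩ with hdFdef
  set mFun : Fin k → X :=
    fun j => ⟨(ψ (posO n j)).1.getRight (hR j), mem_X_of_right _ _⟩ with hmFdef
  have hdFun : ∀ j : Fin k, (ψ (posE n j)).1 = Sum.inl (dFun j).1 :=
    fun j => (Sum.inl_getLeft _ _).symm
  have hmFun : ∀ j : Fin k, (ψ (posO n j)).1 = Sum.inr (mFun j).1 :=
    fun j => (Sum.inr_getRight _ _).symm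
  -- injectivity
  have hposEinj : Function.Injective (posE n) := by
    intro j j' h
    have : 2 * j.val = 2 * j'.val := congrArg Fin.val h
    exact Fin.ext (by omega)
  have hposOinj : Function.Injective (posO n) := by
    intro j j' h
    have : 2 * j.val + 1 = 2 * j'.val + 1 := congrArg Fin.val h
    exact Fin.ext (by omega)
  have hdInj : Function.Injective dFun := by
    intro j j' h
    apply hposEinj
    apply ψ.injective
    apply Subtype.ext
    rw [hdFun j, hdFun j']
    exact congrArg (Sum.inl ∘ Subtype.val) h
  have hmInj : Function.Injective mFun := by
    intro j j' h
    apply hposOinj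
    apply ψ.injective
    apply Subtype.ext
    rw [hmFun j, hmFun j']
    exact congrArg (Sum.inr ∘ Subtype.val) h
  have hdSurj : Function.Surjective dFun := by
    intro p
    have hv : (Sum.inl p.1 : ℕ ⊕ ℕ) ∈ bdgVerts X := p.2
    set i := ψ.symm ⟨Sum.inl p.1, hv⟩ with hi
    have hψi : (ψ i).1 = Sum.inl p.1 := by rw [hi, ψ.apply_symm_apply]
    have hEv : i.val % 2 = 0 := (hside i).mp (by rw [hψi]; rfl)
    have hlt := i.isLt
    refine ⟨⟨i.val / 2, by omega⟩, ?_⟩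
    have hpe : posE n ⟨i.val / 2, by omega⟩ = i := Fin.ext (by simp [posE]; omega)
    apply Subtype.ext
    have h2 : (Sum.inl (dFun ⟨i.val / 2, by omega⟩).1 : ℕ ⊕ ℕ) = Sum.inl p.1 := by
      rw [← hdFun, hpe, hψi]
    exact (Sum.inl.injEq _ _).mp h2
  have hmSurj : Function.Surjective mFun := by
    intro m
    have hv : (Sum.inr m.1 : ℕ ⊕ ℕ) ∈ bdgVerts X := m.2
    set i := ψ.symm ⟨Sum.inr m.1, hv⟩ with hi
    have hψi : (ψ i).1 = Sum.inr m.1 := by rw [hi, ψ.apply_symm_apply]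
    have hOd : ¬ (i.val % 2 = 0) := fun hc => by
      have := (hside i).mpr hc; rw [hψi] at this; simp at this
    have hlt := i.isLt
    refine ⟨⟨i.val / 2, by omega⟩, ?_⟩
    have hpe : posO n ⟨i.val / 2, by omega⟩ = i := Fin.ext (by simp [posO]; omega)
    apply Subtype.ext
    have h2 : (Sum.inr (mFun ⟨i.val / 2, by omega⟩).1 : ℕ ⊕ ℕ) = Sum.inr m.1 := by
      rw [← hmFun, hpe, hψi]
    exact (Sum.inr.injEq _ _).mp h2
  -- adjacency extraction: even-odd neighbours in the big cycle
  have hAdjEO : ∀ (j j' : Fin k), (SimpleGraph.cycleGraph n).Adj (posE n j) (posO n j') →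
      ((dFun j).1.Prime ∧ (mFun j').1 ∈ X ∧ (dFun j).1 ∣ (mFun j').1) := by
    intro j j' h
    have h2 := ψ.map_rel_iff.mpr h
    rw [bdgGraph_adj, hdFun, hmFun] at h2
    exact bdg_adj_inl_inr h2
  -- Delta adjacency
  have hDadj : ∀ j j' : Fin k,
      (deltaG X).Adj (dFun j) (dFun j') ↔ (SimpleGraph.cycleGraph k).Adj j j' := by
    intro j j'
    constructor
    · rintro ⟨hne, hp, hq, m, hmX, hpm, hqm⟩
      have hvm : (Sum.inr m : ℕ ⊕ ℕ) ∈ bdgVerts X := hmX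
      have hψc : (ψ (ψ.symm ⟨Sum.inr m, hvm⟩)).1 = Sum.inr m := by
        rw [ψ.apply_symm_apply]
      have h1 : (SimpleGraph.cycleGraph n).Adj (posE n j) (ψ.symm ⟨Sum.inr m, hvm⟩) := by
        rw [← ψ.map_rel_iff, bdgGraph_adj, hdFun, hψc]
        exact bdg_adj_mk hp hmX hpm
      have h2 : (SimpleGraph.cycleGraph n).Adj (posE n j') (ψ.symm ⟨Sum.inr m, hvm⟩) := by
        rw [← ψ.map_rel_iff, bdgGraph_adj, hdFun, hψc]
        exact bdg_adj_mk hq hmX hqm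
      have hjv : j.val ≠ j'.val := fun hc => hne (congrArg (fun t => (dFun t).1) (Fin.ext hc))
      have hj1 := j.isLt
      have hj2 := j'.isLt
      have hcl := (ψ.symm ⟨Sum.inr m, hvm⟩).isLt
      rw [cycle_adj_nat] at h1 h2 ⊢
      simp only [posE_val] at h1 h2
      omega
    · intro hcyc
      rw [cycle_adj_nat] at hcyc
      have main : ∀ a b : Fin k, (a.val + 1 = b.val ∨ (b.val = 0 ∧ a.val = k - 1 ∧ 2 ≤ k)) →
          (deltaG X).Adj (dFun a) (dFun b) := by
        intro a b hab
        have ha1 := a.isLt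
        have hb1 := b.isLt
        have h1 : (SimpleGraph.cycleGraph n).Adj (posE n a) (posO n a) := by
          rw [cycle_adj_nat]; simp only [posE_val, posO_val, eq_self_iff_true, true_or, or_true]
          all_goals rcases hab with h4|h4 <;> omega
        have h2 : (SimpleGraph.cycleGraph n).Adj (posE n b) (posO n a) := by
          rw [cycle_adj_nat]; simp only [posE_val, posO_val, eq_self_iff_true, true_or, or_true]
          all_goals rcases hab with h4|h4 <;> omega
        obtain ⟨hp, hmX, hpm⟩ := hAdjEO a a h1
        obtain ⟨hq, -, hqm⟩ := hAdjEO b a h2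
        have hne : (dFun a).1 ≠ (dFun b).1 := by
          intro hc
          have h3 := congrArg Fin.val (hdInj (Subtype.ext hc))
          rcases hab with h4|h4 <;> omega
        exact ⟨hne, hp, hq, (mFun a).1, hmX, hpm, hqm⟩
      rcases hcyc with h|h|h|h
      · exact main j j' (Or.inl h)
      · exact (main j' j (Or.inl h)).symm
      · exact (main j' j (Or.inr ⟨h.1, h.2.1, h.2.2⟩)).symm
      · exact main j j' (Or.inr ⟨h.1, h.2.1, h.2.2⟩)
  -- Gamma adjacency
  have hGadj : ∀ j j' : Fin k,
      (gammaG X).Adj (mFun j) (mFun j') ↔ (SimpleGraph.cycleGraph k).Adj j j' := by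
    intro j j'
    constructor
    · rintro ⟨hne, hmX, hmX', hgcd⟩
      set p := (Nat.gcd (mFun j).1 (mFun j').1).minFac with hpdef
      have hp : p.Prime := Nat.minFac_prime hgcd
      have hpm : p ∣ (mFun j).1 := (Nat.minFac_dvd _).trans (Nat.gcd_dvd_left _ _)
      have hpm' : p ∣ (mFun j').1 := (Nat.minFac_dvd _).trans (Nat.gcd_dvd_right _ _)
      have hvp : (Sum.inl p : ℕ ⊕ ℕ) ∈ bdgVerts X := ⟨hp, (mFun j).1, (mFun j).2, hpm⟩
      have hψc : (ψ (ψ.symm ⟨Sum.inl p, hvp⟩)).1 = Sum.inl p := by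
        rw [ψ.apply_symm_apply]
      have h1 : (SimpleGraph.cycleGraph n).Adj (posO n j) (ψ.symm ⟨Sum.inl p, hvp⟩) := by
        rw [← ψ.map_rel_iff, bdgGraph_adj, hmFun, hψc]
        exact bdg_adj_mk' hp hmX hpm
      have h2 : (SimpleGraph.cycleGraph n).Adj (posO n j') (ψ.symm ⟨Sum.inl p, hvp⟩) := by
        rw [← ψ.map_rel_iff, bdgGraph_adj, hmFun, hψc]
        exact bdg_adj_mk' hp hmX' hpm'
      have hjv : j.val ≠ j'.val := fun hc => hne (congrArg (fun t => (mFun t).1) (Fin.ext hc))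
      have hj1 := j.isLt
      have hj2 := j'.isLt
      have hcl := (ψ.symm ⟨Sum.inl p, hvp⟩).isLt
      rw [cycle_adj_nat] at h1 h2 ⊢
      simp only [posO_val] at h1 h2
      omega
    · intro hcyc
      rw [cycle_adj_nat] at hcyc
      have main : ∀ a b : Fin k, (a.val + 1 = b.val ∨ (b.val = 0 ∧ a.val = k - 1 ∧ 2 ≤ k)) →
          (gammaG X).Adj (mFun a) (mFun b) := by
        intro a b hab
        have ha1 := a.isLt
        have hb1 := b.isLt
        have h1 : (SimpleGraph.cycleGraph n).Adj (posE n b) (posO n a) := by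
          rw [cycle_adj_nat]; simp only [posE_val, posO_val, eq_self_iff_true, true_or, or_true]
          all_goals rcases hab with h4|h4 <;> omega
        have h2 : (SimpleGraph.cycleGraph n).Adj (posE n b) (posO n b) := by
          rw [cycle_adj_nat]; simp only [posE_val, posO_val, eq_self_iff_true, true_or, or_true]
          all_goals rcases hab with h4|h4 <;> omega
        obtain ⟨hp, hmX, hpm⟩ := hAdjEO b a h1
        obtain ⟨-, hmX', hpm'⟩ := hAdjEO b b h2
        have hne : (mFun a).1 ≠ (mFun b).1 := by
          intro hc
          have h3 := congrArg Fin.val (hmInj (Subtype.ext hc))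
          rcases hab with h4|h4 <;> omega
        refine ⟨hne, hmX, hmX', fun hc => hp.ne_one (Nat.dvd_one.mp ?_)⟩
        rw [← hc]
        exact Nat.dvd_gcd hpm hpm'
      rcases hcyc with h|h|h|h
      · exact main j j' (Or.inl h)
      · exact (main j' j (Or.inl h)).symm
      · exact (main j' j (Or.inr ⟨h.1, h.2.1, h.2.2⟩)).symm
      · exact main j j' (Or.inr ⟨h.1, h.2.1, h.2.2⟩)
  exact ⟨⟨(RelIso.mk (Equiv.ofBijective dFun ⟨hdInj, hdSurj⟩)
            (fun {a b} => hDadj a b)).symm⟩,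
         ⟨(RelIso.mk (Equiv.ofBijective mFun ⟨hmInj, hmSurj⟩)
            (fun {a b} => hGadj a b)).symm⟩⟩

/-- If `B(X)` is a cycle of length at least 6 then both `Δ(X)` and `Γ(X)` are cycles. -/
theorem stmt2 (X : Set ℕ) (hfin : X.Finite) (hgt : ∀ x ∈ X, 1 < x) (n : ℕ) (hn : 6 ≤ n)
    (h : IsCycleOfLen (bdgGraph X) n) :
    (∃ k, IsCycleOfLen (deltaG X) k) ∧ (∃ k, IsCycleOfLen (gammaG X) k) := by
  obtain ⟨φ⟩ := h
  obtain ⟨m, rfl⟩ : ∃ m, n = m + 2 := ⟨n - 2, by omega⟩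
  have hpos : 0 < m + 2 := by omega
  -- alternation along the cycle
  have halt : ∀ i j : Fin (m+2), (SimpleGraph.cycleGraph (m+2)).Adj i j →
      ((φ.symm i).1.isLeft = true ↔ ¬ (φ.symm j).1.isLeft = true) := by
    intro i j hij
    have h2 := φ.symm.map_rel_iff.mpr hij
    rw [bdgGraph_adj] at h2
    rcases h2 with ⟨p, mm, h1, h2, -⟩ | ⟨p, mm, h1, h2, -⟩ <;> rw [h1, h2] <;> simp
  have hparity : ∀ i : ℕ, (hi : i < m+2) →
      ((φ.symm ⟨i, hi⟩).1.isLeft = true ↔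
        (i % 2 = 0 ↔ (φ.symm ⟨0, hpos⟩).1.isLeft = true)) := by
    intro i
    induction i with
    | zero => intro hi; simp
    | succ i ih =>
      intro hi
      have hadj : (SimpleGraph.cycleGraph (m+2)).Adj ⟨i, by omega⟩ ⟨i+1, hi⟩ :=
        (cycle_adj_nat _ _).mpr (Or.inl rfl)
      have h2 := halt _ _ hadj
      have h3 := ih (by omega)
      have h4 : (i+1) % 2 = 0 ↔ ¬ (i % 2 = 0) := by omega
      tauto
  have heven : (m + 2) % 2 = 0 := by
    have hadj : (SimpleGraph.cycleGraph (m+2)).Adj ⟨m+1, by omega⟩ ⟨0, hpos⟩ :=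
      (cycle_adj_nat _ _).mpr (Or.inr (Or.inr (Or.inr
        ⟨rfl, show m+1 = m+2-1 by omega, by omega⟩)))
    have h5 := halt _ _ hadj
    have h6 := hparity (m+1) (by omega)
    by_contra hodd
    have h7 : (m+1) % 2 = 0 := by omega
    tauto
  by_cases hS0 : (φ.symm ⟨0, hpos⟩).1.isLeft = true
  · have hside : ∀ i : Fin (m+2), (φ.symm i).1.isLeft = true ↔ i.val % 2 = 0 := by
      intro i
      have h2 := hparity i.val i.isLt
      rw [Fin.eta] at h2
      tauto
    obtain ⟨hD, hG⟩ := key hn heven φ.symm hside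
    exact ⟨⟨(m+2)/2, hD⟩, ⟨(m+2)/2, hG⟩⟩
  · have hrot : ∀ a b : Fin (m+2),
        (SimpleGraph.cycleGraph (m+2)).Adj (a+1) (b+1) ↔
          (SimpleGraph.cycleGraph (m+2)).Adj a b := by
      intro a b
      simp [SimpleGraph.cycleGraph_adj, add_sub_add_right_eq_sub]
    let rot : SimpleGraph.cycleGraph (m+2) ≃g SimpleGraph.cycleGraph (m+2) :=
      ⟨Equiv.addRight 1, fun {a b} => hrot a b⟩
    have hside : ∀ i : Fin (m+2), ((rot.trans φ.symm) i).1.isLeft = true ↔ i.val % 2 = 0 := by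
      intro i
      have hilt := i.isLt
      have hv : ((i+1 : Fin (m+2))).val = (i.val + 1) % (m+2) := by
        rw [Fin.add_def, Fin.val_one]
      have h2 := hparity ((i+1 : Fin (m+2))).val ((i+1 : Fin (m+2))).isLt
      rw [Fin.eta] at h2
      have h7 : ((i+1 : Fin (m+2))).val % 2 = 0 ↔ ¬ (i.val % 2 = 0) := by
        rw [hv, two_mul_mod (i.val+1) (m+2) (by omega)]
        split_ifs <;> omega
      show (φ.symm (i+1)).1.isLeft = true ↔ i.val % 2 = 0
      tauto
    obtain ⟨hD, hG⟩ := key hn heven (rot.trans φ.symm) hside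
    exact ⟨⟨(m+2)/2, hD⟩, ⟨(m+2)/2, hG⟩⟩
end

section
/- Let X be a finite set of integers greater than 1 and suppose the bipartite divisor graph B(X) is a cycle of length 4. Then X = {m, n} with m ≠ n, and there exist distinct primes p, q such that the set of primes dividing m equals {p, q} and the set of primes dividing n equals {p, q}. -/
open CategoryTheory

lemma cycle4_rot (i j : Fin 4) :
    (SimpleGraph.cycleGraph 4).Adj (i + 1) (j + 1) ↔ (SimpleGraph.cycleGraph 4).Adj i j := by
  revert i j; decide

lemma main_aux (X : Set ℕ) (hgt : ∀ x ∈ X, 1 < x) (f : Fin 4 → bdgVerts X)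
    (hinj : Function.Injective f) (hsurj : Function.Surjective f)
    (hadj : ∀ i j, (bdgGraph X).Adj (f i) (f j) ↔ (SimpleGraph.cycleGraph 4).Adj i j)
    (p : ℕ) (hp : (f 0).1 = Sum.inl p) :
    ∃ m n p q : ℕ, m ≠ n ∧ p ≠ q ∧ p.Prime ∧ q.Prime ∧ X = {m, n} ∧
      m.primeFactors = {p, q} ∧ n.primeFactors = {p, q} := by
  have adj01 : (bdg X).Adj (f 0).1 (f 1).1 := (hadj 0 1).2 (by decide)
  have adj12 : (bdg X).Adj (f 1).1 (f 2).1 := (hadj 1 2).2 (by decide)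
  have adj23 : (bdg X).Adj (f 2).1 (f 3).1 := (hadj 2 3).2 (by decide)
  have adj30 : (bdg X).Adj (f 3).1 (f 0).1 := (hadj 3 0).2 (by decide)
  -- extract m from adj01
  obtain ⟨p1, m, h0, h1, hpp1, hmX, hpm1⟩ | ⟨p1, m, h0, h1, _, _, _⟩ := adj01
  swap
  · rw [hp] at h1; exact absurd h1 (by simp)
  have ep1 : p1 = p := by rw [hp] at h0; exact (Sum.inl_injective h0).symm
  rw [ep1] at hpm1
  have hpp : p.Prime := ep1 ▸ hpp1
  -- extract q from adj12
  obtain ⟨a, b, ha, hb, _, _, _⟩ | ⟨q, m2, h2, h2b, hq, hm2X, hqm2⟩ := adj12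
  · rw [h1] at ha; exact absurd ha (by simp)
  have em2 : m2 = m := by rw [h1] at h2b; exact (Sum.inr_injective h2b).symm
  rw [em2] at hqm2
  -- extract n from adj23
  obtain ⟨q2, n, h3a, h3, hq2, hnX, hq2n⟩ | ⟨a, b, ha, hb, _, _, _⟩ := adj23
  swap
  · rw [h2] at hb; exact absurd hb (by simp)
  have eq2 : q2 = q := by rw [h2] at h3a; exact (Sum.inl_injective h3a).symm
  rw [eq2] at hq2n
  -- p divides n from adj30
  obtain ⟨a, b, ha, hb, _, _, _⟩ | ⟨p2, n2, ha, hb, _, _, hpn2⟩ := adj30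
  · rw [h3] at ha; exact absurd ha (by simp)
  have ep2 : p2 = p := by rw [hp] at ha; exact (Sum.inl_injective ha).symm
  have en2 : n2 = n := by rw [h3] at hb; exact (Sum.inr_injective hb).symm
  rw [ep2, en2] at hpn2
  have hmn : m ≠ n := by
    intro e; apply (show (1 : Fin 4) ≠ 3 by decide)
    apply hinj; apply Subtype.ext; rw [h1, h3, e]
  have hpq : p ≠ q := by
    intro e; apply (show (0 : Fin 4) ≠ 2 by decide)
    apply hinj; apply Subtype.ext; rw [hp, h2, e]
  have hm0 : m ≠ 0 := by have := hgt m hmX; omega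
  have hn0 : n ≠ 0 := by have := hgt n hnX; omega
  have key : ∀ i : Fin 4, (f i).1 = Sum.inl p ∨ (f i).1 = Sum.inr m ∨
      (f i).1 = Sum.inl q ∨ (f i).1 = Sum.inr n := by
    intro i
    fin_cases i
    · exact Or.inl hp
    · exact Or.inr (Or.inl h1)
    · exact Or.inr (Or.inr (Or.inl h2))
    · exact Or.inr (Or.inr (Or.inr h3))
  refine ⟨m, n, p, q, hmn, hpq, hpp, hq, ?_, ?_, ?_⟩
  · ext x
    simp only [Set.mem_insert_iff, Set.mem_singleton_iff]
    constructor
    · intro hx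
      obtain ⟨i, hi⟩ := hsurj ⟨Sum.inr x, hx⟩
      have hv : (f i).1 = Sum.inr x := by rw [hi]
      have hk := key i
      rw [hv] at hk
      rcases hk with hk | hk | hk | hk <;>
        first
        | exact Or.inl (Sum.inr_injective hk)
        | exact Or.inr (Sum.inr_injective hk)
        | simp at hk
    · rintro (rfl | rfl); exacts [hmX, hnX]
  all_goals {
    ext r
    simp only [Nat.mem_primeFactors, Finset.mem_insert, Finset.mem_singleton]
    constructor
    · rintro ⟨hr, hrd, -⟩
      have hmem : (Sum.inl r : ℕ ⊕ ℕ) ∈ bdgVerts X := by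
        refine ⟨hr, ?_⟩
        first
          | exact ⟨m, hmX, hrd⟩
          | exact ⟨n, hnX, hrd⟩
      obtain ⟨i, hi⟩ := hsurj ⟨Sum.inl r, hmem⟩
      have hv : (f i).1 = Sum.inl r := by rw [hi]
      have hk := key i
      rw [hv] at hk
      rcases hk with hk | hk | hk | hk <;>
        first
        | exact Or.inl (Sum.inl_injective hk)
        | exact Or.inr (Sum.inl_injective hk)
        | simp at hk
    · rintro (rfl | rfl)
      · exact ⟨hpp, by assumption, by assumption⟩
      · exact ⟨hq, by assumption, by assumption⟩
  }

/-- If `B(X)` is a 4-cycle then `X = {m, n}` where `m, n` have the same two prime divisors. -/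
theorem stmt3 (X : Set ℕ) (hfin : X.Finite) (hgt : ∀ x ∈ X, 1 < x)
    (h : IsCycleOfLen (bdgGraph X) 4) :
    ∃ m n p q : ℕ, m ≠ n ∧ p ≠ q ∧ p.Prime ∧ q.Prime ∧ X = {m, n} ∧
      m.primeFactors = {p, q} ∧ n.primeFactors = {p, q} := by
  obtain ⟨e⟩ := h
  have adj01 : (bdg X).Adj (e.symm 0).1 (e.symm 1).1 :=
    e.symm.map_adj_iff.2 (by decide)
  obtain ⟨p, m, h0, h1, -⟩ | ⟨p, m, h1, h0, -⟩ := adj01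
  · exact main_aux X hgt (fun i => e.symm i)
      (e.symm.toEquiv.injective) (e.symm.toEquiv.surjective)
      (fun i j => e.symm.map_adj_iff) p h0
  · refine main_aux X hgt (fun i => e.symm (i + 1)) ?_ ?_ ?_ p h1
    · intro i j hij
      exact add_right_cancel (e.symm.toEquiv.injective hij)
    · intro v
      obtain ⟨i, hi⟩ := e.symm.toEquiv.surjective v
      exact ⟨i - 1, by show e.symm (i - 1 + 1) = v; rw [sub_add_cancel]; exact hi⟩
    · intro i j
      rw [e.symm.map_adj_iff, cycle4_rot]
end

section
/- Let X ⊆ ℕ be a finite nonempty set of integers greater than 1 and let B(X), Δ(X), Γ(X) be its bipartite divisor graph, prime graph, and common divisor graph. Then the number of connected components of B(X), Δ(X), and Γ(X) coincide. -/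
open CategoryTheory

open SimpleGraph

/-- prime anchor of a vertex of B -/
def anchP (v : ℕ ⊕ ℕ) (p : ℕ) : Prop :=
  v = Sum.inl p ∨ ∃ m, v = Sum.inr m ∧ p.Prime ∧ p ∣ m

/-- number anchor of a vertex of B -/
def anchN (v : ℕ ⊕ ℕ) (m : ℕ) : Prop :=
  v = Sum.inr m ∨ ∃ p, v = Sum.inl p ∧ p ∣ m

lemma delta_reach_of_common {X : Set ℕ} (p q : rhoSet X) (m : ℕ) (hm : m ∈ X)
    (hp : p.1 ∣ m) (hq : q.1 ∣ m) : (deltaG X).Reachable p q := by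
  by_cases h : p = q
  · exact h ▸ Reachable.refl p
  · refine SimpleGraph.Adj.reachable ?_
    exact ⟨fun hh => h (Subtype.ext hh), p.2.1, q.2.1, m, hm, hp, hq⟩

lemma gamma_reach_of_common {X : Set ℕ} (m n : X) (p : ℕ) (hp : p.Prime)
    (hpm : p ∣ m.1) (hpn : p ∣ n.1) : (gammaG X).Reachable m n := by
  by_cases h : m = n
  · exact h ▸ Reachable.refl m
  · refine SimpleGraph.Adj.reachable ?_
    refine ⟨fun hh => h (Subtype.ext hh), m.2, n.2, fun hg => ?_⟩
    exact Nat.Prime.one_lt hp |>.ne' (Nat.eq_one_of_dvd_one (hg ▸ Nat.dvd_gcd hpm hpn))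

lemma walk_delta {X : Set ℕ} {u v : bdgVerts X} (w : (bdgGraph X).Walk u v) :
    ∀ (p q : rhoSet X), anchP u.1 p.1 → anchP v.1 q.1 → (deltaG X).Reachable p q := by
  induction w with
  | @nil u =>
    intro p q hp hq
    obtain ⟨x, hx⟩ := u
    cases x with
    | inl r =>
      rcases hp with hp | ⟨m, hm, _⟩
      · rcases hq with hq | ⟨m, hm, _⟩
        · have : p.1 = q.1 := by
            rw [Sum.inl.injEq] at hp hq; rw [← hp, ← hq]
          exact (Subtype.ext this) ▸ Reachable.refl p
        · simp at hm
      · simp at hm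
    | inr m =>
      have hmX : m ∈ X := hx
      rcases hp with hp | ⟨m', hm', hpp, hpd⟩
      · simp at hp
      · rcases hq with hq | ⟨m'', hm'', hqp, hqd⟩
        · simp at hq
        · rw [Sum.inr.injEq] at hm' hm''
          exact delta_reach_of_common p q m hmX (hm' ▸ hpd) (hm'' ▸ hqd)
  | @cons u u' v h w ih =>
    intro p q hp hq
    have h' : (bdg X).Adj u.1 u'.1 := h
    rcases h' with ⟨r, m, h1, h2, hr, hmX, hdvd⟩ | ⟨r, m, h1, h2, hr, hmX, hdvd⟩
    · -- u = inl r, u' = inr m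
      have hpr : p.1 = r := by
        rcases hp with hp | ⟨m', hm', _⟩
        · rw [h1, Sum.inl.injEq] at hp; exact hp.symm
        · rw [h1] at hm'; simp at hm'
      exact ih p q (Or.inr ⟨m, h2, p.2.1, hpr ▸ hdvd⟩) hq
    · -- u = inr m, u' = inl r
      have hrrho : r ∈ rhoSet X := ⟨hr, m, hmX, hdvd⟩
      rcases hp with hp | ⟨m', hm', hpp, hpd⟩
      · rw [h2] at hp; simp at hp
      · rw [h2, Sum.inr.injEq] at hm'
        refine (delta_reach_of_common p ⟨r, hrrho⟩ m hmX (hm' ▸ hpd) hdvd).trans ?_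
        exact ih ⟨r, hrrho⟩ q (Or.inl h1) hq

lemma walk_gamma {X : Set ℕ} {u v : bdgVerts X} (w : (bdgGraph X).Walk u v) :
    ∀ (m n : X), anchN u.1 m.1 → anchN v.1 n.1 → (gammaG X).Reachable m n := by
  induction w with
  | @nil u =>
    intro m n hm hn
    obtain ⟨x, hx⟩ := u
    cases x with
    | inl r =>
      have hrrho : r ∈ rhoSet X := hx
      rcases hm with hm | ⟨p, hp, hpd⟩
      · simp at hm
      · rcases hn with hn | ⟨p', hp', hpd'⟩
        · simp at hn
        · rw [Sum.inl.injEq] at hp hp'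
          exact gamma_reach_of_common m n r hrrho.1 (hp ▸ hpd) (hp' ▸ hpd')
    | inr x =>
      rcases hm with hm | ⟨p, hp, _⟩
      · rcases hn with hn | ⟨p', hp', _⟩
        · have : m.1 = n.1 := by
            rw [Sum.inr.injEq] at hm hn; rw [← hm, ← hn]
          exact (Subtype.ext this) ▸ Reachable.refl m
        · simp at hp'
      · simp at hp
  | @cons u u' v h w ih =>
    intro m n hm hn
    have h' : (bdg X).Adj u.1 u'.1 := h
    rcases h' with ⟨r, m', h1, h2, hr, hmX, hdvd⟩ | ⟨r, m', h1, h2, hr, hmX, hdvd⟩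
    · -- u = inl r, u' = inr m'
      have hrm : r ∣ m.1 := by
        rcases hm with hm | ⟨p, hp, hpd⟩
        · rw [h1] at hm; simp at hm
        · rw [h1, Sum.inl.injEq] at hp; exact hp.symm ▸ hpd
      refine (gamma_reach_of_common m ⟨m', hmX⟩ r hr hrm hdvd).trans ?_
      exact ih ⟨m', hmX⟩ n (Or.inl h2) hn
    · -- u = inr m', u' = inl r
      have hmm : m.1 = m' := by
        rcases hm with hm | ⟨p, hp, _⟩
        · rw [h2, Sum.inr.injEq] at hm; exact hm.symm
        · rw [h2] at hp; simp at hp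
      exact ih m n (Or.inr ⟨r, h1, hmm ▸ hdvd⟩) hn

lemma inl_mem {X : Set ℕ} (p : rhoSet X) : Sum.inl p.1 ∈ bdgVerts X := p.2

lemma inr_mem {X : Set ℕ} (m : X) : Sum.inr m.1 ∈ bdgVerts X := m.2

lemma adj_inl_inr {X : Set ℕ} (p : rhoSet X) (m : X) (h : p.1 ∣ m.1) :
    (bdgGraph X).Adj ⟨Sum.inl p.1, inl_mem p⟩ ⟨Sum.inr m.1, inr_mem m⟩ :=
  Or.inl ⟨p.1, m.1, rfl, rfl, p.2.1, m.2, h⟩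


lemma reachB_of_reachDelta {X : Set ℕ} {p q : rhoSet X} (h : (deltaG X).Reachable p q) :
    (bdgGraph X).Reachable ⟨Sum.inl p.1, inl_mem p⟩ ⟨Sum.inl q.1, inl_mem q⟩ := by
  obtain ⟨w⟩ := h
  induction w with
  | nil => exact Reachable.refl _
  | @cons p p' q h w ih =>
    obtain ⟨_, _, _, m, hm, hpm, hp'm⟩ := h
    exact ((adj_inl_inr p ⟨m, hm⟩ hpm).reachable.trans
      (adj_inl_inr p' ⟨m, hm⟩ hp'm).reachable.symm).trans ih

lemma reachB_of_reachGamma {X : Set ℕ} {m n : X} (h : (gammaG X).Reachable m n) :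
    (bdgGraph X).Reachable ⟨Sum.inr m.1, inr_mem m⟩ ⟨Sum.inr n.1, inr_mem n⟩ := by
  obtain ⟨w⟩ := h
  induction w with
  | nil => exact Reachable.refl _
  | @cons m m' n h w ih =>
    obtain ⟨_, _, _, hg⟩ := h
    set p := (Nat.gcd m.1 m'.1).minFac with hp
    have hpp : p.Prime := Nat.minFac_prime hg
    have hpm : p ∣ m.1 := (Nat.minFac_dvd _).trans (Nat.gcd_dvd_left _ _)
    have hpm' : p ∣ m'.1 := (Nat.minFac_dvd _).trans (Nat.gcd_dvd_right _ _)
    have hprho : p ∈ rhoSet X := ⟨hpp, m.1, m.2, hpm⟩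
    exact ((adj_inl_inr ⟨p, hprho⟩ m hpm).reachable.symm.trans
      (adj_inl_inr ⟨p, hprho⟩ m' hpm').reachable).trans ih

/-- map from Δ-components to B-components -/
def fDelta (X : Set ℕ) : (deltaG X).ConnectedComponent → (bdgGraph X).ConnectedComponent :=
  ConnectedComponent.lift
    (fun p => (bdgGraph X).connectedComponentMk ⟨Sum.inl p.1, inl_mem p⟩)
    (fun p q w _ => ConnectedComponent.sound (reachB_of_reachDelta ⟨w⟩))

/-- map from Γ-components to B-components -/
def fGamma (X : Set ℕ) : (gammaG X).ConnectedComponent → (bdgGraph X).ConnectedComponent :=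
  ConnectedComponent.lift
    (fun m => (bdgGraph X).connectedComponentMk ⟨Sum.inr m.1, inr_mem m⟩)
    (fun m n w _ => ConnectedComponent.sound (reachB_of_reachGamma ⟨w⟩))


lemma fDelta_bij (X : Set ℕ) (hgt : ∀ x ∈ X, 1 < x) : Function.Bijective (fDelta X) := by
  constructor
  · intro c d
    refine ConnectedComponent.ind₂ (fun p q h => ?_) c d
    have hr : (bdgGraph X).Reachable ⟨Sum.inl p.1, inl_mem p⟩ ⟨Sum.inl q.1, inl_mem q⟩ :=
      (SimpleGraph.ConnectedComponent.eq).mp h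
    obtain ⟨w⟩ := hr
    exact ConnectedComponent.sound (walk_delta w p q (Or.inl rfl) (Or.inl rfl))
  · intro c
    refine ConnectedComponent.ind (fun u => ?_) c
    obtain ⟨x, hx⟩ := u
    cases x with
    | inl p =>
      exact ⟨(deltaG X).connectedComponentMk ⟨p, hx⟩, rfl⟩
    | inr m =>
      have hmX : m ∈ X := hx
      have hm1 : 1 < m := hgt m hmX
      have hpp : m.minFac.Prime := Nat.minFac_prime (by omega)
      have hprho : m.minFac ∈ rhoSet X := ⟨hpp, m, hmX, Nat.minFac_dvd m⟩
      refine ⟨(deltaG X).connectedComponentMk ⟨m.minFac, hprho⟩, ?_⟩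
      exact ConnectedComponent.sound
        (adj_inl_inr ⟨m.minFac, hprho⟩ ⟨m, hmX⟩ (Nat.minFac_dvd m)).reachable

lemma fGamma_bij (X : Set ℕ) : Function.Bijective (fGamma X) := by
  constructor
  · intro c d
    refine ConnectedComponent.ind₂ (fun m n h => ?_) c d
    have hr : (bdgGraph X).Reachable ⟨Sum.inr m.1, inr_mem m⟩ ⟨Sum.inr n.1, inr_mem n⟩ :=
      (SimpleGraph.ConnectedComponent.eq).mp h
    obtain ⟨w⟩ := hr
    exact ConnectedComponent.sound (walk_gamma w m n (Or.inl rfl) (Or.inl rfl))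
  · intro c
    refine ConnectedComponent.ind (fun u => ?_) c
    obtain ⟨x, hx⟩ := u
    cases x with
    | inl p =>
      have hprho : p ∈ rhoSet X := hx
      obtain ⟨hpp, m, hmX, hpm⟩ := hprho
      refine ⟨(gammaG X).connectedComponentMk ⟨m, hmX⟩, ?_⟩
      exact ConnectedComponent.sound
        (adj_inl_inr ⟨p, hx⟩ ⟨m, hmX⟩ hpm).reachable.symm
    | inr m =>
      exact ⟨(gammaG X).connectedComponentMk ⟨m, hx⟩, rfl⟩
/-- The numbers of connected components of `B(X)`, `Δ(X)` and `Γ(X)` coincide. -/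
theorem stmt15 (X : Set ℕ) (hfin : X.Finite) (hne : X.Nonempty) (hgt : ∀ x ∈ X, 1 < x) :
    Nat.card ((bdgGraph X).ConnectedComponent) = Nat.card ((deltaG X).ConnectedComponent) ∧
    Nat.card ((deltaG X).ConnectedComponent) = Nat.card ((gammaG X).ConnectedComponent) := by
  have h1 : Nat.card ((deltaG X).ConnectedComponent) = Nat.card ((bdgGraph X).ConnectedComponent) :=
    Nat.card_eq_of_bijective _ (fDelta_bij X hgt)
  have h2 : Nat.card ((gammaG X).ConnectedComponent) = Nat.card ((bdgGraph X).ConnectedComponent) :=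
    Nat.card_eq_of_bijective _ (fGamma_bij X)
  exact ⟨h1.symm, h1.trans h2.symm⟩
end
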